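/- Let T : Set → Set be a monad on the category of sets. Suppose there exist elements "x+y" ∈ T({x,y}), "−x" ∈ T({x}), and 0 ∈ T(∅) such that the corresponding operations define an abelian group structure on every T-algebra, and all other operations t_T : B^X → B (for t ∈ T(X)) are homomorphisms of these abelian group structures. Then the category of T-algebras is abelian, with kernels, images, and cokernels computed on underlying abelian groups. -/

import Mathlib

open CategoryTheory

universe u

namespace AdditiveMonadStmt

variable (T : CategoryTheory.Monad (Type u))

/-- The `X`-ary operation on a `T`-algebra `B` associated to an element `t ∈ T(X)`:
`t_T(b) = π_B (T(b)(t))`. -/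
def op (B : T.Algebra) {X : Type u} (t : T.obj X) (b : X → B.A) : B.A :=
  B.a (T.map (TypeCat.ofHom b) t)

/-- The binary operation on a `T`-algebra induced by an element `"x+y" ∈ T({x,y})`. -/
def addOf (add : T.obj (ULift.{u} Bool)) (B : T.Algebra) (x y : B.A) : B.A :=
  op T B add (fun i => if i.down then x else y)

/-- The unary operation on a `T`-algebra induced by an element `"−x" ∈ T({x})`. -/
def negOf (neg : T.obj PUnit.{u + 1}) (B : T.Algebra) (x : B.A) : B.A :=
  op T B neg (fun _ => x)

/-- The constant on a `T`-algebra induced by an element `0 ∈ T(∅)`. -/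
def zeroOf (zero : T.obj PEmpty.{u + 1}) (B : T.Algebra) : B.A :=
  op T B zero PEmpty.elim

/-! ### Auxiliary development -/

theorem map_map {X Y Z : Type u} (g : X → Y) (k : Y → Z) (t : T.obj X) :
    T.map (TypeCat.ofHom k) (T.map (TypeCat.ofHom g) t) = T.map (TypeCat.ofHom (fun x => k (g x))) t :=
  (ConcreteCategory.congr_hom (T.toFunctor.map_comp (TypeCat.ofHom g) (TypeCat.ofHom k)) t).symm

theorem map_map' {X Y Z : Type u} (g : X ⟶ Y) (k : Y ⟶ Z) (t : T.obj X) :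
    T.map k (T.map g t) = T.map (g ≫ k) t :=
  (ConcreteCategory.congr_hom (T.toFunctor.map_comp g k) t).symm

/-- All the data and hypotheses of the main theorem, bundled. -/
structure Ctx where
  add : T.obj (ULift.{u} Bool)
  neg : T.obj PUnit.{u + 1}
  zero : T.obj PEmpty.{u + 1}
  hassoc : ∀ (B : T.Algebra) (x y z : B.A),
      addOf T add B (addOf T add B x y) z = addOf T add B x (addOf T add B y z)
  hcomm : ∀ (B : T.Algebra) (x y : B.A), addOf T add B x y = addOf T add B y x
  hzero : ∀ (B : T.Algebra) (x : B.A), addOf T add B (zeroOf T zero B) x = x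
  hneg : ∀ (B : T.Algebra) (x : B.A), addOf T add B (negOf T neg B x) x = zeroOf T zero B
  hadditive : ∀ (B : T.Algebra) (X : Type u) (t : T.obj X) (b c : X → B.A),
      op T B t (fun x => addOf T add B (b x) (c x)) =
        addOf T add B (op T B t b) (op T B t c)

namespace Ctx

variable {T} (h : Ctx T)

/-- The abelian group structure on (the carrier of) any `T`-algebra. -/
def grp (B : T.Algebra) : AddCommGroup B.A := by
  letI : Zero B.A := ⟨zeroOf T h.zero B⟩
  letI : Add B.A := ⟨addOf T h.add B⟩
  letI : Neg B.A := ⟨negOf T h.neg B⟩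
  exact
  { add := (· + ·)
    zero := 0
    neg := (- ·)
    nsmul := nsmulRec
    zsmul := zsmulRec
    add_assoc := h.hassoc B
    add_comm := h.hcomm B
    zero_add := h.hzero B
    add_zero := fun x => (h.hcomm B x _).trans (h.hzero B x)
    neg_add_cancel := h.hneg B }

theorem op_hom {B C : T.Algebra} (g : B ⟶ C) {X : Type u} (t : T.obj X) (b : X → B.A) :
    op T C t (fun x => g.f (b x)) = g.f (op T B t b) := by
  unfold op
  rw [← map_map T b g.f t]
  exact ConcreteCategory.congr_hom g.h (T.map (TypeCat.ofHom b) t)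

theorem hom_add {B C : T.Algebra} (g : B ⟶ C) (x y : B.A) :
    g.f (addOf T h.add B x y) = addOf T h.add C (g.f x) (g.f y) := by
  rw [addOf, addOf, ← op_hom g]
  congr 1
  funext i
  by_cases hi : i.down <;> simp [hi]

theorem hom_neg {B C : T.Algebra} (g : B ⟶ C) (x : B.A) :
    g.f (negOf T h.neg B x) = negOf T h.neg C (g.f x) := by
  rw [negOf, negOf, ← op_hom g]

theorem hom_zero {B C : T.Algebra} (g : B ⟶ C) :
    g.f (zeroOf T h.zero B) = zeroOf T h.zero C := by
  rw [zeroOf, zeroOf, ← op_hom g]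
  congr 1
  funext e
  exact e.elim

theorem op_zero (B : T.Algebra) {X : Type u} (t : T.obj X) :
    op T B t (fun _ => zeroOf T h.zero B) = zeroOf T h.zero B := by
  letI := h.grp B
  have e : op T B t (fun _ => zeroOf T h.zero B) =
      addOf T h.add B (op T B t fun _ => zeroOf T h.zero B) (op T B t fun _ => zeroOf T h.zero B) := by
    rw [← h.hadditive B X t (fun _ => zeroOf T h.zero B) (fun _ => zeroOf T h.zero B)]
    congr 1
    funext x
    exact (h.hzero B _).symm
  have e2 : (op T B t fun _ => zeroOf T h.zero B) + (op T B t fun _ => zeroOf T h.zero B)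
      = (op T B t fun _ => zeroOf T h.zero B) + 0 := by
    rw [add_zero]
    exact e.symm
  exact add_left_cancel e2

/-! ### The pointwise sum of algebra morphisms -/

/-- Pointwise sum of morphisms of algebras. -/
def homAdd {B C : T.Algebra} (g k : B ⟶ C) : B ⟶ C where
  f := TypeCat.ofHom fun x => addOf T h.add C (g.f x) (k.f x)
  h := by
    refine ConcreteCategory.hom_ext _ _ fun t => ?_
    show op T C t _ = addOf T h.add C (g.f (B.a t)) (k.f (B.a t))
    rw [h.hadditive C B.A t g.f k.f]
    rw [show op T C t g.f = g.f (B.a t) from ConcreteCategory.congr_hom g.h t,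
      show op T C t k.f = k.f (B.a t) from ConcreteCategory.congr_hom k.h t]

/-- Pointwise negation of a morphism of algebras. -/
def homNeg {B C : T.Algebra} (g : B ⟶ C) : B ⟶ C where
  f := TypeCat.ofHom fun x => negOf T h.neg C (g.f x)
  h := by
    refine ConcreteCategory.hom_ext _ _ fun t => ?_
    show op T C t _ = negOf T h.neg C (g.f (B.a t))
    letI := h.grp C
    have e : addOf T h.add C (op T C t g.f) (op T C t fun x => negOf T h.neg C (g.f x)) =
        zeroOf T h.zero C := by
      rw [← h.hadditive C B.A t g.f (fun x => negOf T h.neg C (g.f x))]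
      have : (fun x => addOf T h.add C (g.f x) (negOf T h.neg C (g.f x))) =
          (fun _ : B.A => zeroOf T h.zero C) := by
        funext x
        exact (h.hcomm C _ _).trans (h.hneg C (g.f x))
      rw [this, h.op_zero]
    have := eq_neg_of_add_eq_zero_right (a := op T C t g.f)
      (b := op T C t fun x => negOf T h.neg C (g.f x)) e
    rw [this]
    show -(op T C t g.f) = -(g.f (B.a t))
    rw [show op T C t g.f = g.f (B.a t) from ConcreteCategory.congr_hom g.h t]

/-- The zero morphism of algebras. -/
def homZero (B C : T.Algebra) : B ⟶ C where
  f := TypeCat.ofHom fun _ => zeroOf T h.zero C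
  h := by
    refine ConcreteCategory.hom_ext _ _ fun t => ?_
    show op T C t _ = zeroOf T h.zero C
    exact h.op_zero C t

/-- The category of `T`-algebras is preadditive. -/
def preadditive : Preadditive T.Algebra where
  homGroup B C := by
    letI : Zero (B ⟶ C) := ⟨h.homZero B C⟩
    letI : Add (B ⟶ C) := ⟨h.homAdd⟩
    letI : Neg (B ⟶ C) := ⟨h.homNeg⟩
    exact
    { add := (· + ·)
      zero := 0
      neg := (- ·)
      nsmul := nsmulRec
      zsmul := zsmulRec
      add_assoc := fun a b c => Monad.Algebra.Hom.ext (ConcreteCategory.hom_ext _ _ fun x => h.hassoc C _ _ _)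
      add_comm := fun a b => Monad.Algebra.Hom.ext (ConcreteCategory.hom_ext _ _ fun x => h.hcomm C _ _)
      zero_add := fun a => Monad.Algebra.Hom.ext (ConcreteCategory.hom_ext _ _ fun x => h.hzero C _)
      add_zero := fun a => Monad.Algebra.Hom.ext (ConcreteCategory.hom_ext _ _ fun x =>
        (h.hcomm C _ _).trans (h.hzero C _))
      neg_add_cancel := fun a => Monad.Algebra.Hom.ext (ConcreteCategory.hom_ext _ _ fun x => h.hneg C _) }
  add_comp P Q R f f' g := by
    refine Monad.Algebra.Hom.ext (ConcreteCategory.hom_ext _ _ fun x => ?_)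
    show g.f (addOf T h.add Q (f.f x) (f'.f x)) = addOf T h.add R (g.f (f.f x)) (g.f (f'.f x))
    exact h.hom_add g (f.f x) (f'.f x)
  comp_add P Q R f g g' := Monad.Algebra.Hom.ext (ConcreteCategory.hom_ext _ _ fun x => rfl)

/-! ### Kernels -/

/-- The kernel of a morphism of algebras, as an algebra. -/
def kerAlg {B C : T.Algebra} (f : B ⟶ C) : T.Algebra where
  A := { x : B.A // f.f x = zeroOf T h.zero C }
  a := TypeCat.ofHom fun u => ⟨B.a (T.map (TypeCat.ofHom Subtype.val) u), by
    have e1 : (fun x : { x : B.A // f.f x = zeroOf T h.zero C } => f.f x.val) =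
        fun _ => zeroOf T h.zero C := funext fun x => x.2
    have e := op_hom f (t := u) (b := Subtype.val)
    rw [e1, h.op_zero] at e
    exact e.symm⟩
  unit := by
    refine ConcreteCategory.hom_ext _ _ fun x => ?_
    refine Subtype.ext ?_
    show B.a (T.map (TypeCat.ofHom Subtype.val) (T.η.app _ x)) = x.val
    rw [show T.map (TypeCat.ofHom Subtype.val) (T.η.app _ x) = T.η.app B.A x.val from
      (ConcreteCategory.congr_hom (T.η.naturality (TypeCat.ofHom
          (Subtype.val : { x : B.A // f.f x = zeroOf T h.zero C } → B.A))) x).symm]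
    exact ConcreteCategory.congr_hom B.unit x.val
  assoc := by
    refine ConcreteCategory.hom_ext _ _ fun w => ?_
    refine Subtype.ext ?_
    show B.a (T.map (TypeCat.ofHom Subtype.val) (T.μ.app _ w)) =
      B.a (T.map (TypeCat.ofHom Subtype.val) (T.map _ w))
    rw [show T.map (TypeCat.ofHom Subtype.val) (T.μ.app _ w) =
        T.μ.app B.A (T.map (T.map (TypeCat.ofHom Subtype.val)) w) from
      (ConcreteCategory.congr_hom (T.μ.naturality (TypeCat.ofHom
          (Subtype.val : { x : B.A // f.f x = zeroOf T h.zero C } → B.A))) w).symm]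
    rw [show B.a (T.μ.app B.A (T.map (T.map (TypeCat.ofHom Subtype.val)) w))
        = B.a (T.map B.a (T.map (T.map (TypeCat.ofHom Subtype.val)) w)) from
      types_congr_hom B.assoc (T.map (T.map (TypeCat.ofHom Subtype.val)) w)]
    rw [map_map', map_map']
    rfl

/-- The inclusion of the kernel. -/
def kerι {B C : T.Algebra} (f : B ⟶ C) : h.kerAlg f ⟶ B where
  f := TypeCat.ofHom Subtype.val
  h := rfl

/-- Lifting a morphism to the kernel. -/
def kerLift {B C D : T.Algebra} (f : B ⟶ C) (g : D ⟶ B)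
    (hg : ∀ d, f.f (g.f d) = zeroOf T h.zero C) : D ⟶ h.kerAlg f where
  f := TypeCat.ofHom fun d => ⟨g.f d, hg d⟩
  h := by
    refine ConcreteCategory.hom_ext _ _ fun u => ?_
    refine Subtype.ext ?_
    show B.a (T.map (TypeCat.ofHom Subtype.val) (T.map _ u)) = g.f (D.a u)
    exact (congrArg (fun z => B.a z) (map_map' T
      (TypeCat.ofHom fun d => (⟨g.f d, hg d⟩ : { x : B.A // f.f x = zeroOf T h.zero C }))
      (TypeCat.ofHom Subtype.val) u)).trans (ConcreteCategory.congr_hom g.h u)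

/-! ### Cokernels -/

/-- The relation identifying elements that differ by something in the image of `f`. -/
def r {B C : T.Algebra} (f : B ⟶ C) (x y : C.A) : Prop :=
  ∃ b, addOf T h.add C (f.f b) y = x

theorem r_equiv {B C : T.Algebra} (f : B ⟶ C) : Equivalence (h.r f) := by
  letI := h.grp B
  letI := h.grp C
  have hf0 : f.f 0 = (0 : C.A) := h.hom_zero f
  have hfadd : ∀ x y, f.f (x + y) = f.f x + f.f y := h.hom_add f
  have hfneg : ∀ x, f.f (-x) = -(f.f x) := h.hom_neg f
  constructor
  · intro x
    exact ⟨0, by show f.f 0 + x = x; rw [hf0, zero_add]⟩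
  · rintro x y ⟨b, hb⟩
    refine ⟨-b, ?_⟩
    show f.f (-b) + x = y
    rw [hfneg, ← hb]
    show -(f.f b) + (f.f b + y) = y
    rw [← add_assoc, neg_add_cancel, zero_add]
  · rintro x y z ⟨b, hb⟩ ⟨c, hc⟩
    refine ⟨b + c, ?_⟩
    have hb' : f.f b + y = x := hb
    have hc' : f.f c + z = y := hc
    show f.f (b + c) + z = x
    rw [hfadd, add_assoc, hc']
    exact hb' 

/-- The setoid for the cokernel quotient. -/
def cokSetoid {B C : T.Algebra} (f : B ⟶ C) : Setoid C.A :=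
  ⟨h.r f, h.r_equiv f⟩

theorem keyOp {B C : T.Algebra} (f : B ⟶ C) {X : Type u} (t : T.obj X) (g k : X → C.A)
    (hgk : ∀ x, h.r f (g x) (k x)) : h.r f (op T C t g) (op T C t k) := by
  choose b hb using hgk
  refine ⟨op T B t b, ?_⟩
  rw [← op_hom f t b, ← h.hadditive C X t (fun x => f.f (b x)) k]
  congr 1
  funext x
  exact hb x

theorem keyOp' {B C : T.Algebra} (f : B ⟶ C) {X : Type u} (t : T.obj X) (g k : X → C.A)
    (hgk : ∀ x, Quotient.mk (h.cokSetoid f) (g x) = Quotient.mk (h.cokSetoid f) (k x)) :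
    Quotient.mk (h.cokSetoid f) (op T C t g) = Quotient.mk (h.cokSetoid f) (op T C t k) :=
  Quotient.sound (h.keyOp f t g k fun x => Quotient.exact (hgk x))

/-- The cokernel of a morphism of algebras, as an algebra. -/
noncomputable def cokAlg {B C : T.Algebra} (f : B ⟶ C) : T.Algebra where
  A := Quotient (h.cokSetoid f)
  a := TypeCat.ofHom fun u => Quotient.mk _ (C.a (T.map (TypeCat.ofHom Quotient.out) u))
  unit := by
    refine ConcreteCategory.hom_ext _ _ fun q => ?_
    show Quotient.mk _ (C.a (T.map (TypeCat.ofHom Quotient.out) (T.η.app _ q))) = q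
    rw [show T.map (TypeCat.ofHom Quotient.out) (T.η.app _ q) = T.η.app C.A q.out from
      (ConcreteCategory.congr_hom (T.η.naturality
        (TypeCat.ofHom (Quotient.out : Quotient (h.cokSetoid f) → C.A))) q).symm]
    rw [show C.a (T.η.app C.A q.out) = q.out from ConcreteCategory.congr_hom C.unit q.out]
    exact Quotient.out_eq q
  assoc := by
    refine ConcreteCategory.hom_ext _ _ fun w => ?_
    show Quotient.mk _ (C.a (T.map (TypeCat.ofHom Quotient.out) (T.μ.app _ w))) =
      Quotient.mk _ (C.a (T.map (TypeCat.ofHom Quotient.out) (T.map _ w)))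
    rw [show T.map (TypeCat.ofHom Quotient.out) (T.μ.app _ w) =
        T.μ.app C.A (T.map (T.map (TypeCat.ofHom Quotient.out)) w) from
      (ConcreteCategory.congr_hom (T.μ.naturality
        (TypeCat.ofHom (Quotient.out : Quotient (h.cokSetoid f) → C.A))) w).symm]
    rw [show C.a (T.μ.app C.A (T.map (T.map (TypeCat.ofHom Quotient.out)) w))
        = C.a (T.map C.a (T.map (T.map (TypeCat.ofHom Quotient.out)) w)) from
      types_congr_hom C.assoc (T.map (T.map (TypeCat.ofHom Quotient.out)) w)]
    rw [map_map', map_map']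
    exact (h.keyOp' f w
      (fun x => Quotient.out (Quotient.mk (h.cokSetoid f) (C.a (T.map (TypeCat.ofHom Quotient.out) x))))
      (fun x => C.a (T.map (TypeCat.ofHom Quotient.out) x)) fun u => Quotient.out_eq _).symm

/-- The projection to the cokernel. -/
noncomputable def cokπ {B C : T.Algebra} (f : B ⟶ C) : C ⟶ h.cokAlg f where
  f := TypeCat.ofHom (Quotient.mk _)
  h := by
    refine ConcreteCategory.hom_ext _ _ fun u => ?_
    show Quotient.mk _ (C.a (T.map (TypeCat.ofHom Quotient.out) (T.map (TypeCat.ofHom (Quotient.mk _)) u))) =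
      Quotient.mk _ (C.a u)
    rw [map_map]
    have e2 : C.a u = C.a (T.map (TypeCat.ofHom fun x : C.A => x) u) := by
      rw [show T.map (TypeCat.ofHom fun x : C.A => x) u = u from
        ConcreteCategory.congr_hom (T.toFunctor.map_id C.A) u]
    rw [e2]
    exact h.keyOp' f u _ _ fun x => by
      show Quotient.mk _ (Quotient.out (Quotient.mk _ x)) = Quotient.mk _ x
      rw [Quotient.out_eq]

theorem cokπ_f {B C : T.Algebra} (f : B ⟶ C) (x : C.A) :
    (h.cokπ f).f x = Quotient.mk (h.cokSetoid f) x := rfl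

/-- Descending a morphism along the cokernel projection. -/
noncomputable def cokDesc {B C D : T.Algebra} (f : B ⟶ C) (g : C ⟶ D)
    (hg : ∀ x y, h.r f x y → g.f x = g.f y) : h.cokAlg f ⟶ D where
  f := TypeCat.ofHom (Quotient.lift g.f fun a b hab => hg a b hab)
  h := by
    refine ConcreteCategory.hom_ext _ _ fun u => ?_
    have e1 : (fun q : Quotient (h.cokSetoid f) => g.f (Quotient.out q))
        = Quotient.lift g.f fun a b hab => hg a b hab := by
      funext q
      conv_rhs => rw [← Quotient.out_eq q]
      rfl
    show D.a (T.map (TypeCat.ofHom (Quotient.lift g.f fun a b hab => hg a b hab)) u)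
        = g.f (C.a (T.map (TypeCat.ofHom Quotient.out) u))
    rw [show g.f (C.a (T.map (TypeCat.ofHom (Quotient.out : Quotient (h.cokSetoid f) → C.A)) u)) =
        D.a (T.map (TypeCat.ofHom g.f)
          (T.map (TypeCat.ofHom (Quotient.out : Quotient (h.cokSetoid f) → C.A)) u)) from
      (types_congr_hom g.h _).symm]
    exact congrArg (fun z => D.a z) ((congrArg (fun F => T.map (TypeCat.ofHom F) u) e1).symm.trans
      (map_map T (Quotient.out : Quotient (h.cokSetoid f) → C.A) g.f u).symm)

theorem cokDesc_fac {B C D : T.Algebra} (f : B ⟶ C) (g : C ⟶ D)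
    (hg : ∀ x y, h.r f x y → g.f x = g.f y) : h.cokπ f ≫ h.cokDesc f g hg = g :=
  Monad.Algebra.Hom.ext (ConcreteCategory.hom_ext _ _ fun _ => rfl)

end Ctx

/-- If a monad `T` on the category of sets admits elements `"x+y" ∈ T({x,y})`,
`"−x" ∈ T({x})` and `0 ∈ T(∅)` whose induced operations make every `T`-algebra an abelian
group, and all operations `t_T : B^X → B` for `t ∈ T(X)` are additive with respect to these
abelian group structures, then the category of `T`-algebras is abelian. -/
theorem abelian_algebras
    (add : T.obj (ULift.{u} Bool)) (neg : T.obj PUnit.{u + 1}) (zero : T.obj PEmpty.{u + 1})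
    (hassoc : ∀ (B : T.Algebra) (x y z : B.A),
      addOf T add B (addOf T add B x y) z = addOf T add B x (addOf T add B y z))
    (hcomm : ∀ (B : T.Algebra) (x y : B.A), addOf T add B x y = addOf T add B y x)
    (hzero : ∀ (B : T.Algebra) (x : B.A), addOf T add B (zeroOf T zero B) x = x)
    (hneg : ∀ (B : T.Algebra) (x : B.A), addOf T add B (negOf T neg B x) x = zeroOf T zero B)
    (hadditive : ∀ (B : T.Algebra) (X : Type u) (t : T.obj X) (b c : X → B.A),
      op T B t (fun x => addOf T add B (b x) (c x)) =
        addOf T add B (op T B t b) (op T B t c)) :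
    Nonempty (Abelian T.Algebra) := by
  classical
  let h : Ctx T := ⟨add, neg, zero, hassoc, hcomm, hzero, hneg, hadditive⟩
  letI P : Preadditive T.Algebra := h.preadditive
  haveI hfl : Limits.HasFiniteLimits T.Algebra := ⟨fun J _ _ =>
    hasLimitsOfShape_of_hasLimitsOfShape_createsLimitsOfShape (Monad.forget T)⟩
  haveI hfp : Limits.HasFiniteProducts T.Algebra := inferInstance
  haveI hkn : Limits.HasKernels T.Algebra := inferInstance
  -- the projection to the cokernel kills `f`
  have wcok : ∀ {B C : T.Algebra} (f : B ⟶ C), f ≫ h.cokπ f = 0 := by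
    intro B C f
    refine Monad.Algebra.Hom.ext (ConcreteCategory.hom_ext _ _ fun b => ?_)
    show Quotient.mk (h.cokSetoid f) (f.f b) = zeroOf T h.zero (h.cokAlg f)
    rw [← h.hom_zero (h.cokπ f)]
    exact Quotient.sound ⟨b, (h.hcomm C _ _).trans (h.hzero C _)⟩
  -- morphisms annihilating `f` respect the cokernel relation
  have cokDescHyp : ∀ {B C D : T.Algebra} (f : B ⟶ C) (g : C ⟶ D), f ≫ g = 0 →
      ∀ x y, h.r f x y → g.f x = g.f y := by
    intro B C D f g w x y hxy
    obtain ⟨b, hb⟩ := hxy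
    letI := h.grp C; letI := h.grp D
    have hgb : g.f (f.f b) = 0 := ConcreteCategory.congr_hom (congrArg Monad.Algebra.Hom.f w) b
    have e : g.f x = g.f (f.f b) + g.f y := by
      rw [← hb]; exact h.hom_add g (f.f b) y
    rw [e, hgb, zero_add]
  -- the projection is an epimorphism
  have cokEpi : ∀ {B C : T.Algebra} (f : B ⟶ C), Epi (h.cokπ f) := by
    intro B C f
    refine (Monad.forget T).epi_of_epi_map ?_
    rw [CategoryTheory.epi_iff_surjective]
    exact fun q => Quotient.exists_rep q
  -- cokernels
  have cokCol : ∀ {B C : T.Algebra} (f : B ⟶ C),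
      Limits.IsColimit (Limits.CokernelCofork.ofπ (h.cokπ f) (wcok f)) := by
    intro B C f
    haveI := cokEpi f
    exact Limits.CokernelCofork.IsColimit.ofπ' (h.cokπ f) (wcok f)
      (fun {D} g hg => ⟨h.cokDesc f g (cokDescHyp f g hg), h.cokDesc_fac f g _⟩)
  haveI hck : Limits.HasCokernels T.Algebra :=
    ⟨fun f => Limits.HasColimit.mk ⟨_, cokCol f⟩⟩
  -- epimorphisms are surjective
  have epiSurj : ∀ {B C : T.Algebra} (f : B ⟶ C), Epi f → Function.Surjective f.f := by
    intro B C f hf y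
    letI := h.grp C
    haveI := hf
    have e : h.cokπ f = 0 := by
      rw [← cancel_epi f, wcok f, Limits.comp_zero]
    have e2 : Quotient.mk (h.cokSetoid f) y = Quotient.mk (h.cokSetoid f) (zeroOf T h.zero C) :=
      (ConcreteCategory.congr_hom (congrArg Monad.Algebra.Hom.f e) y).trans (h.hom_zero (h.cokπ f)).symm
    obtain ⟨b, hb⟩ := Quotient.exact e2
    exact ⟨b, (add_zero (f.f b)).symm.trans hb⟩
  -- every epimorphism is a cokernel of its kernel
  haveI hnec : IsNormalEpiCategory T.Algebra := by
    constructor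
    intro B C f hf
    have hs : Function.Surjective f.f := epiSurj f hf
    choose s hs' using hs
    have hker : ∀ {D : T.Algebra} (k : B ⟶ D), h.kerι f ≫ k = 0 →
        ∀ x y : B.A, f.f x = f.f y → k.f x = k.f y := by
      intro D k hk x y hxy
      letI := h.grp B; letI := h.grp C; letI := h.grp D
      have hx : f.f (x + -y) = zeroOf T h.zero C := by
        have e1 : f.f (x + -y) = f.f x + f.f (-y) := h.hom_add f x (-y)
        have e2 : f.f (-y) = -(f.f y) := h.hom_neg f y
        show f.f (x + -y) = (0 : C.A)
        rw [e1, e2, hxy, add_neg_cancel]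
      have e3 : k.f (x + -y) = zeroOf T h.zero D :=
        ConcreteCategory.congr_hom (congrArg Monad.Algebra.Hom.f hk) (⟨x + -y, hx⟩ : (h.kerAlg f).A)
      have e4 : k.f x + -(k.f y) = (0 : D.A) := by
        have e1 : k.f (x + -y) = k.f x + k.f (-y) := h.hom_add k x (-y)
        have e2 : k.f (-y) = -(k.f y) := h.hom_neg k y
        rw [e1, e2] at e3; exact e3
      exact add_neg_eq_zero.mp e4
    haveI := hf
    refine ⟨h.kerAlg f, h.kerι f, Monad.Algebra.Hom.ext (ConcreteCategory.hom_ext _ _ fun x => x.2), ?_⟩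
    refine Limits.CokernelCofork.IsColimit.ofπ' f _ (fun {D} k hk => ?_)
    refine ⟨{ f := TypeCat.ofHom fun y => k.f (s y), h := ?_ }, ?_⟩
    · refine ConcreteCategory.hom_ext _ _ fun u => ?_
      show D.a (T.map (TypeCat.ofHom fun y => k.f (s y)) u) = k.f (s (C.a u))
      have lhs : D.a (T.map (TypeCat.ofHom fun y => k.f (s y)) u) =
          k.f (B.a (T.map (TypeCat.ofHom s) u)) := by
        rw [← map_map T s k.f u]
        exact ConcreteCategory.congr_hom k.h (T.map (TypeCat.ofHom s) u)
      rw [lhs]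
      refine hker k hk _ _ ?_
      have r1 : f.f (B.a (T.map (TypeCat.ofHom s) u)) = C.a u := by
        have e := Ctx.op_hom f (t := u) (b := s)
        rw [show (fun x => f.f (s x)) = fun x : C.A => x from funext hs'] at e
        refine e.symm.trans ?_
        show C.a (T.map (TypeCat.ofHom fun x : C.A => x) u) = C.a u
        rw [show T.map (TypeCat.ofHom fun x : C.A => x) u = u from
          ConcreteCategory.congr_hom (T.toFunctor.map_id C.A) u]
      rw [r1, hs' (C.a u)]
    · exact Monad.Algebra.Hom.ext (ConcreteCategory.hom_ext _ _ fun x => hker k hk _ _ (hs' (f.f x)))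
  -- every monomorphism is a kernel of its cokernel
  haveI hnmc : IsNormalMonoCategory T.Algebra := by
    constructor
    intro B C f hf
    haveI := hf
    haveI : (Monad.forget T).PreservesMonomorphisms :=
      Functor.preservesMonomorphisms_of_adjunction (Monad.adj T)
    haveI : Mono ((Monad.forget T).map f) := Functor.map_mono _ f
    have hinj : Function.Injective f.f :=
      (CategoryTheory.mono_iff_injective ((Monad.forget T).map f)).mp inferInstance
    have hlift : ∀ {D : T.Algebra} (k : D ⟶ C), k ≫ h.cokπ f = 0 → ∀ d, ∃ b, f.f b = k.f d := by
      intro D k hk d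
      letI := h.grp C
      have e : Quotient.mk (h.cokSetoid f) (k.f d) =
          Quotient.mk (h.cokSetoid f) (zeroOf T h.zero C) :=
        (ConcreteCategory.congr_hom (congrArg Monad.Algebra.Hom.f hk) d).trans (h.hom_zero (h.cokπ f)).symm
      obtain ⟨b, hb⟩ := Quotient.exact e
      exact ⟨b, (add_zero (f.f b)).symm.trans hb⟩
    refine ⟨h.cokAlg f, h.cokπ f, wcok f, ?_⟩
    refine Limits.KernelFork.IsLimit.ofι' f _ (fun {D} k hk => ?_)
    choose l hl using hlift k hk
    refine ⟨{ f := TypeCat.ofHom l, h := ?_ }, ?_⟩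
    · refine ConcreteCategory.hom_ext _ _ fun u => ?_
      show B.a (T.map (TypeCat.ofHom l) u) = l (D.a u)
      refine hinj ?_
      show f.f (B.a (T.map (TypeCat.ofHom l) u)) = f.f (l (D.a u))
      rw [hl (D.a u)]
      have e2 : f.f (B.a (T.map (TypeCat.ofHom l) u)) = C.a (T.map k.f u) := by
        have e3 := Ctx.op_hom f (t := u) (b := l)
        rw [show (fun x => f.f (l x)) = k.f from funext hl] at e3
        exact e3.symm
      rw [e2]
      exact ConcreteCategory.congr_hom k.h u
    · exact Monad.Algebra.Hom.ext (ConcreteCategory.hom_ext _ _ fun d => hl d)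
  exact ⟨{ toPreadditive := P, toIsNormalMonoCategory := hnmc, toIsNormalEpiCategory := hnec,
           has_finite_products := hfp, has_kernels := hkn, has_cokernels := hck }⟩

end AdditiveMonadStmt
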